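/- Let P_N be the path graph on N ≥ 2 vertices. There exist N − 1 real matrices A^(1), …, A^(N−1), each complying with P_N, such that A^(N−1) ⋯ A^(1) = (1/N)·𝟙𝟙ᵀ. Since P_N has diameter N − 1, path graphs satisfy the definitive consensus conjecture. -/

import Mathlib

open Matrix

/-- A real `N × N` matrix complies with the graph `G` when its off-diagonal
entries vanish outside the edges of `G`. -/
def SimpleGraph.Complies {N : ℕ} (G : SimpleGraph (Fin N))
    (A : Matrix (Fin N) (Fin N) ℝ) : Prop :=
  ∀ i j : Fin N, i ≠ j → ¬ G.Adj i j → A i j = 0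

section Emb

def emb {m : ℕ} (M : Matrix (Fin m) (Fin m) ℝ) : Matrix (Fin (m+2)) (Fin (m+2)) ℝ :=
  Matrix.of fun i j =>
    if hi : 1 ≤ i.val ∧ i.val ≤ m then
      if hj : 1 ≤ j.val ∧ j.val ≤ m then M ⟨i.val - 1, by omega⟩ ⟨j.val - 1, by omega⟩
      else 0
    else if i = j then 1 else 0

lemma emb_apply_mid {m : ℕ} (M : Matrix (Fin m) (Fin m) ℝ) {i j : Fin (m+2)}
    (hi : 1 ≤ i.val ∧ i.val ≤ m) (hj : 1 ≤ j.val ∧ j.val ≤ m) :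
    emb M i j = M ⟨i.val - 1, by omega⟩ ⟨j.val - 1, by omega⟩ := by
  simp [emb, dif_pos hi, dif_pos hj]

lemma emb_apply_right {m : ℕ} (M : Matrix (Fin m) (Fin m) ℝ) {i j : Fin (m+2)}
    (hi : 1 ≤ i.val ∧ i.val ≤ m) (hj : ¬(1 ≤ j.val ∧ j.val ≤ m)) :
    emb M i j = 0 := by
  simp [emb, dif_pos hi, dif_neg hj]

lemma emb_apply_bnd {m : ℕ} (M : Matrix (Fin m) (Fin m) ℝ) {i : Fin (m+2)} (j : Fin (m+2))
    (hi : ¬(1 ≤ i.val ∧ i.val ≤ m)) :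
    emb M i j = if i = j then 1 else 0 := by
  simp [emb, dif_neg hi]

lemma emb_one {m : ℕ} : emb (1 : Matrix (Fin m) (Fin m) ℝ) = 1 := by
  ext i j
  by_cases hi : 1 ≤ i.val ∧ i.val ≤ m
  · by_cases hj : 1 ≤ j.val ∧ j.val ≤ m
    · rw [emb_apply_mid _ hi hj, Matrix.one_apply, Matrix.one_apply]
      by_cases h : i = j
      · rw [if_pos h, if_pos (by subst h; rfl)]
      · rw [if_neg h, if_neg (fun hc => h (Fin.ext (by
          have := congrArg Fin.val hc
          simp only [] at this
          omega)))]
    · rw [emb_apply_right _ hi hj, Matrix.one_apply, if_neg (by intro h; subst h; exact hj hi)]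
  · rw [emb_apply_bnd _ _ hi, Matrix.one_apply]

lemma emb_mul {m : ℕ} (M N : Matrix (Fin m) (Fin m) ℝ) :
    emb (M * N) = emb M * emb N := by
  ext i j
  rw [Matrix.mul_apply]
  by_cases hi : 1 ≤ i.val ∧ i.val ≤ m
  · by_cases hj : 1 ≤ j.val ∧ j.val ≤ m
    · rw [emb_apply_mid _ hi hj, Matrix.mul_apply]
      rw [Fin.sum_univ_succ, Fin.sum_univ_castSucc]
      have h0 : emb M i 0 = 0 := emb_apply_right _ hi (by simp)
      have hl : emb M i ((Fin.last m).succ) = 0 := emb_apply_right _ hi (by simp [Fin.last])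
      rw [h0, hl, zero_mul, zero_mul, zero_add, add_zero]
      apply Finset.sum_congr rfl
      intro l _
      have hk : 1 ≤ (l.castSucc.succ : Fin (m+2)).val ∧ (l.castSucc.succ : Fin (m+2)).val ≤ m := by
        simp [Fin.castSucc, Fin.succ]
      rw [emb_apply_mid _ hi hk, emb_apply_mid _ hk hj]
      congr 2 <;> apply Fin.ext <;> simp
    · rw [emb_apply_right _ hi hj]
      symm
      apply Finset.sum_eq_zero
      intro k _
      by_cases hk : 1 ≤ k.val ∧ k.val ≤ m
      · rw [emb_apply_right _ hk hj, mul_zero]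
      · rw [emb_apply_right _ hi hk, zero_mul]
  · rw [emb_apply_bnd _ _ hi]
    have : ∀ k, emb M i k = if i = k then 1 else 0 := fun k => emb_apply_bnd _ _ hi
    simp only [this, ite_mul, one_mul, zero_mul]
    rw [Finset.sum_ite_eq]
    simp only [Finset.mem_univ, if_true]
    exact (emb_apply_bnd N j hi).symm

def embHom (m : ℕ) : Matrix (Fin m) (Fin m) ℝ →* Matrix (Fin (m+2)) (Fin (m+2)) ℝ where
  toFun := emb
  map_one' := emb_one
  map_mul' := emb_mul

lemma ofFn_eq_of_length {α : Type*} {n : ℕ} (L : List α) (h : L.length = n) :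
    (List.ofFn fun i : Fin n => L[(i : ℕ)]'(by omega)) = L := by
  subst h; exact List.ofFn_getElem

lemma emb_complies {m : ℕ} {M : Matrix (Fin (m+1)) (Fin (m+1)) ℝ}
    (h : (SimpleGraph.pathGraph (m+1)).Complies M) :
    (SimpleGraph.pathGraph (m+3)).Complies (emb M) := by
  intro i j hne hadj
  by_cases hi : 1 ≤ i.val ∧ i.val ≤ m+1
  · by_cases hj : 1 ≤ j.val ∧ j.val ≤ m+1
    · rw [emb_apply_mid _ hi hj]
      apply h
      · intro hc
        apply hne
        apply Fin.ext
        have := congrArg Fin.val hc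
        simp only [] at this
        omega
      · intro hadj'
        apply hadj
        rw [SimpleGraph.pathGraph_adj] at hadj' ⊢
        simp only [] at hadj'
        omega
    · exact emb_apply_right _ hi hj
  · rw [emb_apply_bnd _ _ hi, if_neg hne]

end Emb

set_option maxHeartbeats 1600000 in
lemma step (k : ℕ) (A : Fin k → Matrix (Fin (k+1)) (Fin (k+1)) ℝ)
    (hA : ∀ t, (SimpleGraph.pathGraph (k+1)).Complies (A t))
    (hP : (List.ofFn A).reverse.prod = Matrix.of (fun _ _ => ((k+1 : ℕ) : ℝ)⁻¹)) :
    ∃ A' : Fin (k+2) → Matrix (Fin (k+3)) (Fin (k+3)) ℝ,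
      (∀ t, (SimpleGraph.pathGraph (k+3)).Complies (A' t)) ∧
      (List.ofFn A').reverse.prod = Matrix.of (fun _ _ => ((k+2+1 : ℕ) : ℝ)⁻¹) := by
  obtain ⟨v0, hv0⟩ : ∃ x : Fin (k+3), x = ⟨0, by omega⟩ := ⟨_, rfl⟩
  obtain ⟨v1, hv1⟩ : ∃ x : Fin (k+3), x = ⟨1, by omega⟩ := ⟨_, rfl⟩
  obtain ⟨vm, hvm⟩ : ∃ x : Fin (k+3), x = ⟨k+1, by omega⟩ := ⟨_, rfl⟩
  obtain ⟨vN, hvN⟩ : ∃ x : Fin (k+3), x = ⟨k+2, by omega⟩ := ⟨_, rfl⟩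
  obtain ⟨c, hc⟩ : ∃ x : ℝ, x = ((k:ℝ)+1) / ((k:ℝ)+3) := ⟨_, rfl⟩
  obtain ⟨B, hB⟩ : ∃ x : Matrix (Fin (k+3)) (Fin (k+3)) ℝ, x = Matrix.of (fun i j =>
    (if i = j then (1:ℝ) else 0) + (if i = v1 ∧ j = v0 then 1 else 0) +
      (if i = vm ∧ j = vN then 1 else 0)) := ⟨_, rfl⟩
  obtain ⟨T, hT⟩ : ∃ x : Matrix (Fin (k+3)) (Fin (k+3)) ℝ, x = Matrix.of (fun i j =>
    (if i = v0 ∧ j = v1 then c else 0) + (if i = vN ∧ j = vm then c else 0) +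
      (if (1 ≤ i.val ∧ i.val ≤ k+1) ∧ i = j then c else 0)) := ⟨_, rfl⟩
  obtain ⟨L, hLdef⟩ : ∃ x : List (Matrix (Fin (k+3)) (Fin (k+3)) ℝ),
    x = B :: ((List.ofFn A).map emb ++ [T]) := ⟨_, rfl⟩
  have hL : L.length = k + 2 := by simp [hLdef]
  -- compliance of the pieces
  have hcompB : (SimpleGraph.pathGraph (k+3)).Complies B := by
    intro i j hne hadj
    have h1 : ¬(i = v1 ∧ j = v0) := by
      rintro ⟨rfl, rfl⟩
      exact hadj (by rw [SimpleGraph.pathGraph_adj]; right; simp [hv0, hv1])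
    have h2 : ¬(i = vm ∧ j = vN) := by
      rintro ⟨rfl, rfl⟩
      exact hadj (by rw [SimpleGraph.pathGraph_adj]; left; simp [hvm, hvN])
    simp [hB, if_neg hne, if_neg h1, if_neg h2]
  have hcompT : (SimpleGraph.pathGraph (k+3)).Complies T := by
    intro i j hne hadj
    have h1 : ¬(i = v0 ∧ j = v1) := by
      rintro ⟨rfl, rfl⟩
      exact hadj (by rw [SimpleGraph.pathGraph_adj]; left; simp [hv0, hv1])
    have h2 : ¬(i = vN ∧ j = vm) := by
      rintro ⟨rfl, rfl⟩
      exact hadj (by rw [SimpleGraph.pathGraph_adj]; right; simp [hvm, hvN])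
    have h3 : ¬((1 ≤ i.val ∧ i.val ≤ k+1) ∧ i = j) := fun h => hne h.2
    simp [hT, if_neg h1, if_neg h2, if_neg h3]
  have hcompL : ∀ X ∈ L, (SimpleGraph.pathGraph (k+3)).Complies X := by
    intro X hX
    rw [hLdef] at hX
    rcases List.mem_cons.1 hX with rfl | hX'
    · exact hcompB
    rcases List.mem_append.1 hX' with h | h
    · obtain ⟨a, ha, rfl⟩ := List.mem_map.1 h
      obtain ⟨t, rfl⟩ := List.mem_ofFn.1 ha
      exact emb_complies (hA t)
    · rw [List.mem_singleton] at h
      subst h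
      exact hcompT
  -- the product
  have hembprod : ((List.ofFn A).map emb).reverse.prod
      = emb ((List.ofFn A).reverse.prod) := by
    rw [← List.map_reverse]
    exact (map_list_prod (embHom (k+1)) _).symm
  obtain ⟨P, hPdef⟩ : ∃ x : Matrix (Fin (k+1)) (Fin (k+1)) ℝ,
    x = Matrix.of (fun _ _ => ((k+1 : ℕ) : ℝ)⁻¹) := ⟨_, rfl⟩
  have hQ : ∀ i j : Fin (k+3), emb P i j =
      if 1 ≤ i.val ∧ i.val ≤ k+1 then
        (if 1 ≤ j.val ∧ j.val ≤ k+1 then ((k+1 : ℕ) : ℝ)⁻¹ else 0)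
      else if i = j then 1 else 0 := by
    intro i j
    by_cases hi : 1 ≤ i.val ∧ i.val ≤ k+1
    · by_cases hj : 1 ≤ j.val ∧ j.val ≤ k+1
      · rw [emb_apply_mid _ hi hj, if_pos hi, if_pos hj, hPdef]; simp
      · rw [emb_apply_right _ hi hj, if_pos hi, if_neg hj]
    · rw [emb_apply_bnd _ _ hi, if_neg hi]
  obtain ⟨R, hRdef⟩ : ∃ x : Matrix (Fin (k+3)) (Fin (k+3)) ℝ, x = Matrix.of (fun i j =>
    if 1 ≤ i.val ∧ i.val ≤ k+1 then ((k+1 : ℕ) : ℝ)⁻¹ else if i = j then 1 else 0) := ⟨_, rfl⟩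
  have hmid1 : 1 ≤ v1.val ∧ v1.val ≤ k+1 := by simp [hv1]
  have hmidm : 1 ≤ vm.val ∧ vm.val ≤ k+1 := by simp [hvm]
  have hQB : emb P * B = R := by
    ext i j
    rw [Matrix.mul_apply]
    have expand : ∀ x : Fin (k+3), emb P i x * B x j =
        (if x = j then emb P i x else 0) + (if x = v1 ∧ j = v0 then emb P i x else 0) +
          (if x = vm ∧ j = vN then emb P i x else 0) := by
      intro x
      rw [hB]
      simp only [Matrix.of_apply, mul_add, mul_ite, mul_one, mul_zero]
    simp only [expand, Finset.sum_add_distrib]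
    have e1 : (∑ x : Fin (k+3), if x = j then emb P i x else 0) = emb P i j := by
      rw [Finset.sum_ite_eq']; simp
    have e2 : (∑ x : Fin (k+3), if x = v1 ∧ j = v0 then emb P i x else 0)
        = if j = v0 then emb P i v1 else 0 := by
      by_cases hj0 : j = v0
      · simp only [hj0, and_true, if_pos rfl]
        rw [Finset.sum_ite_eq']; simp
      · simp [hj0]
    have e3 : (∑ x : Fin (k+3), if x = vm ∧ j = vN then emb P i x else 0)
        = if j = vN then emb P i vm else 0 := by
      by_cases hjN : j = vN
      · simp only [hjN, and_true, if_pos rfl]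
        rw [Finset.sum_ite_eq']; simp
      · simp [hjN]
    rw [e1, e2, e3, hQ, hQ, hQ, hRdef]
    simp only [Matrix.of_apply]
    by_cases hi : 1 ≤ i.val ∧ i.val ≤ k+1
    · rw [if_pos hi, if_pos hi, if_pos hi, if_pos hi, if_pos hmid1, if_pos hmidm]
      by_cases hj : 1 ≤ j.val ∧ j.val ≤ k+1
      · have hj0 : j ≠ v0 := by intro h; rw [h] at hj; simp [hv0] at hj
        have hjN : j ≠ vN := by intro h; rw [h] at hj; simp [hvN] at hj
        rw [if_pos hj, if_neg hj0, if_neg hjN, add_zero, add_zero]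
      · have : j = v0 ∨ j = vN := by
          have := j.isLt
          rcases Nat.lt_or_ge j.val 1 with h | h
          · left; apply Fin.ext; rw [hv0]; exact Nat.lt_one_iff.mp h
          · right; apply Fin.ext; simp [hvN]; omega
        rcases this with rfl | rfl
        · rw [if_neg hj, if_pos rfl, if_neg (by simp only [hv0, hvN, Fin.mk.injEq]; omega)]
          simp
        · rw [if_neg hj, if_neg (by simp only [hv0, hvN, Fin.mk.injEq]; omega), if_pos rfl]
          simp
    · rw [if_neg hi, if_neg hi, if_neg hi, if_neg hi]
      have hiv1 : i ≠ v1 := by intro h; rw [h] at hi; exact hi hmid1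
      have hivm : i ≠ vm := by intro h; rw [h] at hi; exact hi hmidm
      rw [if_neg hiv1, if_neg hivm]
      by_cases hj0 : j = v0 <;> by_cases hjN : j = vN <;> simp [hj0, hjN]
  have hTR : T * R = Matrix.of (fun _ _ => ((k+2+1 : ℕ) : ℝ)⁻¹) := by
    ext i j
    rw [Matrix.mul_apply]
    have expand : ∀ x : Fin (k+3), T i x * R x j =
        (if i = v0 ∧ x = v1 then c * R x j else 0) +
          (if i = vN ∧ x = vm then c * R x j else 0) +
          (if (1 ≤ i.val ∧ i.val ≤ k+1) ∧ i = x then c * R x j else 0) := by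
      intro x
      rw [hT]
      simp only [Matrix.of_apply, add_mul, ite_mul, zero_mul]
    simp only [expand, Finset.sum_add_distrib]
    have f1 : (∑ x : Fin (k+3), if i = v0 ∧ x = v1 then c * R x j else 0)
        = if i = v0 then c * R v1 j else 0 := by
      by_cases hi0 : i = v0
      · simp only [hi0, true_and, if_pos rfl]
        rw [Finset.sum_ite_eq']; simp
      · simp [hi0]
    have f2 : (∑ x : Fin (k+3), if i = vN ∧ x = vm then c * R x j else 0)
        = if i = vN then c * R vm j else 0 := by
      by_cases hiN : i = vN
      · simp only [hiN, true_and, if_pos rfl]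
        rw [Finset.sum_ite_eq']; simp
      · simp [hiN]
    have f3 : (∑ x : Fin (k+3), if (1 ≤ i.val ∧ i.val ≤ k+1) ∧ i = x then c * R x j else 0)
        = if 1 ≤ i.val ∧ i.val ≤ k+1 then c * R i j else 0 := by
      by_cases hmi : 1 ≤ i.val ∧ i.val ≤ k+1
      · simp only [hmi, true_and, if_pos hmi]
        rw [Finset.sum_ite_eq]; simp
      · simp [hmi]
    rw [f1, f2, f3]
    have hRv1 : R v1 j = ((k+1 : ℕ) : ℝ)⁻¹ := by rw [hRdef]; simp only [Matrix.of_apply]; rw [if_pos hmid1]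
    have hRvm : R vm j = ((k+1 : ℕ) : ℝ)⁻¹ := by rw [hRdef]; simp only [Matrix.of_apply]; rw [if_pos hmidm]
    have harith : c * ((k+1 : ℕ) : ℝ)⁻¹ = ((k+2+1 : ℕ) : ℝ)⁻¹ := by
      have h1 : ((k:ℝ)+1) ≠ 0 := by positivity
      have h3 : ((k:ℝ)+3) ≠ 0 := by positivity
      rw [hc]
      push_cast
      field_simp
      ring
    simp only [Matrix.of_apply]
    by_cases hmi : 1 ≤ i.val ∧ i.val ≤ k+1
    · have hi0 : i ≠ v0 := by intro h; rw [h] at hmi; simp [hv0] at hmi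
      have hiN : i ≠ vN := by intro h; rw [h] at hmi; simp [hvN] at hmi
      have hRi : R i j = ((k+1 : ℕ) : ℝ)⁻¹ := by
        rw [hRdef]; simp only [Matrix.of_apply]; rw [if_pos hmi]
      rw [if_neg hi0, if_neg hiN, if_pos hmi, hRi, harith]
      simp
    · have : i = v0 ∨ i = vN := by
        have := i.isLt
        rcases Nat.lt_or_ge i.val 1 with h | h
        · left; apply Fin.ext; rw [hv0]; exact Nat.lt_one_iff.mp h
        · right; apply Fin.ext; simp [hvN]; omega
      rcases this with rfl | rfl
      · rw [if_pos rfl, if_neg (by simp only [hv0, hvN, Fin.mk.injEq]; omega), if_neg hmi, hRv1, harith]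
        simp
      · rw [if_neg (by simp only [hv0, hvN, Fin.mk.injEq]; omega), if_pos rfl, if_neg hmi, hRvm, harith]
        simp
  refine ⟨fun i => L[(i : ℕ)]'(by rw [hL]; exact i.isLt), ?_, ?_⟩
  · intro t
    exact hcompL _ (List.getElem_mem _)
  · rw [ofFn_eq_of_length L hL, hLdef]
    rw [List.reverse_cons, List.reverse_append, List.prod_append, List.prod_append]
    simp only [List.reverse_cons, List.reverse_nil, List.nil_append, List.prod_cons,
      List.prod_nil, mul_one]
    rw [hembprod, hP]
    rw [← hPdef]
    calc T * (emb P) * B = T * (emb P * B) := by rw [mul_assoc]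
      _ = T * R := by rw [hQB]
      _ = _ := hTR


lemma key (n : ℕ) : ∃ A : Fin n → Matrix (Fin (n+1)) (Fin (n+1)) ℝ,
    (∀ t, (SimpleGraph.pathGraph (n+1)).Complies (A t)) ∧
    (List.ofFn A).reverse.prod = Matrix.of (fun _ _ => ((n+1 : ℕ) : ℝ)⁻¹) := by
  induction n using Nat.strong_induction_on with
  | _ n ih =>
  match n with
  | 0 =>
    refine ⟨Fin.elim0, fun t => t.elim0, ?_⟩
    simp only [List.ofFn_zero, List.reverse_nil, List.prod_nil]
    ext i j
    rw [Matrix.one_apply, Matrix.of_apply]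
    have : i = j := Fin.ext (by omega)
    simp [this]
  | 1 =>
    refine ⟨fun _ => Matrix.of (fun _ _ => (2 : ℝ)⁻¹), ?_, ?_⟩
    · intro t i j hne hadj
      exfalso
      apply hadj
      rw [SimpleGraph.pathGraph_adj]
      have h1 : i.val < 2 := i.isLt
      have h2 : j.val < 2 := j.isLt
      have h3 : i.val ≠ j.val := fun h => hne (Fin.ext h)
      omega
    · simp only [List.ofFn_succ, List.ofFn_zero, List.reverse_cons, List.reverse_nil,
        List.nil_append, List.prod_cons, List.prod_nil, mul_one]
      norm_num
  | (k+2) =>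
    obtain ⟨A, hA, hP⟩ := ih k (by omega)
    exact step k A hA hP

lemma path_walk_le {N : ℕ} (u v : Fin N) (h : u.val ≤ v.val) :
    ∃ p : (SimpleGraph.pathGraph N).Walk u v, p.length = v.val - u.val := by
  obtain ⟨d, hd⟩ : ∃ d, v.val = u.val + d := ⟨v.val - u.val, by omega⟩
  clear h
  induction d generalizing v with
  | zero =>
    have : v = u := Fin.ext (by omega)
    subst this
    exact ⟨SimpleGraph.Walk.nil, by simp⟩
  | succ d ihd =>
    have hw : u.val + d < N := by have := v.isLt; omega
    set w : Fin N := ⟨u.val + d, hw⟩ with hwdef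
    obtain ⟨p, hp⟩ := ihd w (by simp [hwdef])
    have hadj : (SimpleGraph.pathGraph N).Adj w v := by
      rw [SimpleGraph.pathGraph_adj]
      left
      simp [hwdef]
      omega
    refine ⟨p.concat hadj, ?_⟩
    rw [SimpleGraph.Walk.length_concat, hp]
    simp [hwdef]
    omega

lemma path_walk_ge {N : ℕ} (u v : Fin N) (p : (SimpleGraph.pathGraph N).Walk u v) :
    v.val ≤ u.val + p.length ∧ u.val ≤ v.val + p.length := by
  induction p with
  | nil => simp
  | cons h q ihq =>
    rw [SimpleGraph.pathGraph_adj] at h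
    rw [SimpleGraph.Walk.length_cons]
    omega

lemma path_diam {N : ℕ} (hN : 2 ≤ N) : (SimpleGraph.pathGraph N).diam = N - 1 := by
  have hediam : (SimpleGraph.pathGraph N).ediam = ((N - 1 : ℕ) : ℕ∞) := by
    apply le_antisymm
    · apply SimpleGraph.ediam_le_of_edist_le
      intro u v
      rcases le_total u.val v.val with h | h
      · obtain ⟨p, hp⟩ := path_walk_le u v h
        refine le_trans (SimpleGraph.edist_le p) ?_
        rw [hp]
        have hvu : v.val - u.val ≤ N - 1 := by have := v.isLt; omega
        exact Nat.cast_le.mpr hvu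
      · obtain ⟨p, hp⟩ := path_walk_le v u h
        rw [SimpleGraph.edist_comm]
        refine le_trans (SimpleGraph.edist_le p) ?_
        rw [hp]
        have hvu : u.val - v.val ≤ N - 1 := by have := u.isLt; omega
        exact Nat.cast_le.mpr hvu
    · set u0 : Fin N := ⟨0, by omega⟩ with hu0
      set uL : Fin N := ⟨N - 1, by omega⟩ with huL
      obtain ⟨p, hp⟩ := (SimpleGraph.pathGraph_preconnected N u0 uL).exists_walk_length_eq_edist
      have := path_walk_ge u0 uL p
      calc ((N - 1 : ℕ) : ℕ∞) ≤ (p.length : ℕ∞) := by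
            apply Nat.cast_le.2
            simp [hu0, huL] at this
            omega
        _ = (SimpleGraph.pathGraph N).edist u0 uL := hp
        _ ≤ _ := SimpleGraph.edist_le_ediam
  rw [SimpleGraph.diam, hediam, ENat.toNat_coe]

/-- The path graph `P_N` on `N ≥ 2` vertices has diameter `N - 1`, and there
exist `N - 1` compliant matrices whose product is `(1/N)·𝟙𝟙ᵀ`: path graphs
satisfy the definitive consensus conjecture. -/
theorem path_graph_satisfies_conjecture {N : ℕ} (hN : 2 ≤ N) :
    (SimpleGraph.pathGraph N).diam = N - 1 ∧
    ∃ A : Fin (N - 1) → Matrix (Fin N) (Fin N) ℝ,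
      (∀ t : Fin (N - 1), (SimpleGraph.pathGraph N).Complies (A t)) ∧
      (List.ofFn A).reverse.prod = Matrix.of (fun _ _ => (N : ℝ)⁻¹) := by
  constructor
  · exact path_diam hN
  · obtain ⟨M, rfl⟩ : ∃ M, N = M + 1 := ⟨N - 1, by omega⟩
    obtain ⟨A, h1, h2⟩ := key M
    exact ⟨A, h1, h2⟩
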